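/- Let S be a finite set of primes and let E_N^S(0) = (1/N)·#{n : 1 ≤ n ≤ N, n is square-free, and no p ∈ S divides n}. Then for every N ≥ 4, |E_N^S(0) − (6/π²)·∏_{p∈S} p/(p+1)| ≤ C(S)·N^{−1/2}, where C(S) = 4·∏_{p∈S} (p−1)/p + (∏_{p∈S} p − 1) − ∏_{p∈S} (p−1). -/

import Mathlib

open Finset ArithmeticFunction
open scoped ArithmeticFunction.Moebius

namespace SqfDensity

/-- root of the largest square dividing `n` -/
def sqrtPart (n : ℕ) : ℕ := ∏ p ∈ n.primeFactors, p ^ (n.factorization p / 2)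

lemma sqrtPart_ne_zero (n : ℕ) : sqrtPart n ≠ 0 := by
  rw [sqrtPart, Finset.prod_ne_zero_iff]
  exact fun p hp => pow_ne_zero _ (Nat.pos_of_mem_primeFactors hp).ne'

lemma factorization_sqrtPart (n : ℕ) (p : ℕ) :
    (sqrtPart n).factorization p = n.factorization p / 2 := by
  rw [sqrtPart, Nat.factorization_prod
    (fun q hq => pow_ne_zero _ (Nat.pos_of_mem_primeFactors hq).ne')]
  rw [Finset.sum_apply']
  have h1 : ∀ q ∈ n.primeFactors,
      (q ^ (n.factorization q / 2)).factorization p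
        = if q = p then n.factorization q / 2 else 0 := by
    intro q hq
    rw [(Nat.prime_of_mem_primeFactors hq).factorization_pow, Finsupp.single_apply]
  rw [Finset.sum_congr rfl h1, Finset.sum_ite_eq' n.primeFactors p _]
  by_cases hp : p ∈ n.primeFactors
  · simp [hp]
  · simp only [hp, if_false]
    have : n.factorization p = 0 := by
      rw [← Finsupp.notMem_support_iff, Nat.support_factorization]
      exact hp
    omega

lemma sq_dvd_iff {n d : ℕ} (hn : n ≠ 0) (hd : d ≠ 0) : d ^ 2 ∣ n ↔ d ∣ sqrtPart n := by
  rw [← Nat.factorization_le_iff_dvd hd (sqrtPart_ne_zero n),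
      ← Nat.factorization_le_iff_dvd (pow_ne_zero 2 hd) hn, Nat.factorization_pow,
      Finsupp.le_def, Finsupp.le_def]
  constructor
  · intro h p
    have := h p
    simp only [Finsupp.smul_apply, smul_eq_mul] at this
    rw [factorization_sqrtPart]
    omega
  · intro h p
    have := h p
    rw [factorization_sqrtPart] at this
    simp only [Finsupp.smul_apply, smul_eq_mul]
    omega

lemma sqrtPart_eq_one_iff {n : ℕ} (hn : n ≠ 0) : sqrtPart n = 1 ↔ Squarefree n := by
  rw [Nat.squarefree_iff_factorization_le_one hn]
  constructor
  · intro h p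
    have := factorization_sqrtPart n p
    rw [h, Nat.factorization_one] at this
    simp only [Finsupp.coe_zero, Pi.zero_apply] at this
    omega
  · intro h
    rw [sqrtPart]
    apply Finset.prod_eq_one
    intro p _
    rw [Nat.div_eq_of_lt (by have := h p; omega), pow_zero]

lemma moebius_sum_sq_dvd {N n : ℕ} (h1 : 1 ≤ n) (h2 : n ≤ N) :
    ∑ d ∈ (Icc 1 N.sqrt).filter (fun d => d ^ 2 ∣ n), (μ d : ℤ)
      = if Squarefree n then 1 else 0 := by
  have hn : n ≠ 0 := by omega
  have hset : (Icc 1 N.sqrt).filter (fun d => d ^ 2 ∣ n) = (sqrtPart n).divisors := by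
    ext d
    simp only [Finset.mem_filter, Finset.mem_Icc, Nat.mem_divisors]
    constructor
    · rintro ⟨⟨hd1, -⟩, hdvd⟩
      exact ⟨(sq_dvd_iff hn (by omega)).mp hdvd, sqrtPart_ne_zero n⟩
    · rintro ⟨hdvd, -⟩
      have hd0 : d ≠ 0 := by
        rintro rfl
        exact sqrtPart_ne_zero n (Nat.eq_zero_of_zero_dvd hdvd)
      have hsq : d ^ 2 ∣ n := (sq_dvd_iff hn hd0).mpr hdvd
      have hle : d ^ 2 ≤ n := Nat.le_of_dvd (by omega) hsq
      refine ⟨⟨by omega, Nat.le_sqrt.mpr ?_⟩, hsq⟩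
      calc d * d = d ^ 2 := (sq d).symm
        _ ≤ n := hle
        _ ≤ N := h2
  rw [hset, ← coe_mul_zeta_apply, moebius_mul_coe_zeta]
  rw [ArithmeticFunction.one_apply]
  simp [sqrtPart_eq_one_iff hn]

/-- number of integers in `[1,M]` coprime to `P` -/
def Acnt (P M : ℕ) : ℕ := #{m ∈ Icc 1 M | m.Coprime P}

lemma count_mult {P N d : ℕ} (hd : 0 < d) (hdP : d.Coprime P) :
    #{n ∈ Icc 1 N | d ^ 2 ∣ n ∧ n.Coprime P} = Acnt P (N / d ^ 2) := by
  have hd2 : 0 < d ^ 2 := by positivity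
  refine Finset.card_bij' (fun n _ => n / d ^ 2) (fun m _ => d ^ 2 * m) ?_ ?_
    (fun n hn => by
      simp only [Finset.mem_filter] at hn
      exact Nat.mul_div_cancel' hn.2.1)
    (fun m _ => Nat.mul_div_cancel_left m hd2)
  · intro n hn
    simp only [Finset.mem_filter, Finset.mem_Icc] at hn
    obtain ⟨⟨hn1, hn2⟩, hdvd, hcop⟩ := hn
    simp only [Acnt, Finset.mem_filter, Finset.mem_Icc]
    refine ⟨⟨(Nat.one_le_div_iff hd2).mpr (Nat.le_of_dvd (by omega) hdvd),
      Nat.div_le_div_right hn2⟩, Nat.Coprime.coprime_dvd_left (Nat.div_dvd_of_dvd hdvd) hcop⟩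
  · intro m hm
    simp only [Acnt, Finset.mem_filter, Finset.mem_Icc] at hm
    obtain ⟨⟨hm1, hm2⟩, hcop⟩ := hm
    simp only [Finset.mem_filter, Finset.mem_Icc]
    refine ⟨⟨Nat.one_le_iff_ne_zero.mpr (by positivity), ?_⟩, ⟨m, rfl⟩, Nat.Coprime.mul (hdP.pow_left 2) hcop⟩
    calc d ^ 2 * m ≤ d ^ 2 * (N / d ^ 2) := Nat.mul_le_mul_left _ hm2
      _ ≤ N := Nat.mul_div_le N (d ^ 2)

lemma count_empty {P N d : ℕ} (hdP : ¬ d.Coprime P) :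
    #{n ∈ Icc 1 N | d ^ 2 ∣ n ∧ n.Coprime P} = 0 := by
  rw [Finset.card_eq_zero, Finset.filter_eq_empty_iff]
  rintro n - ⟨hdvd, hcop⟩
  exact hdP (hcop.coprime_dvd_left ((dvd_pow_self d two_ne_zero).trans hdvd))

lemma count_identity (P N : ℕ) :
    (#{n ∈ Icc 1 N | Squarefree n ∧ n.Coprime P} : ℤ)
      = ∑ d ∈ Icc 1 N.sqrt, (μ d : ℤ) *
          (if d.Coprime P then (Acnt P (N / d ^ 2) : ℤ) else 0) := by
  have step1 : (#{n ∈ Icc 1 N | Squarefree n ∧ n.Coprime P} : ℤ)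
      = ∑ n ∈ (Icc 1 N).filter (fun n => n.Coprime P),
          (if Squarefree n then (1 : ℤ) else 0) := by
    rw [Finset.sum_boole, Finset.filter_filter]
    norm_num
    congr 1
    apply Finset.filter_congr
    intro x _
    exact and_comm
  rw [step1]
  have step2 : ∀ n ∈ (Icc 1 N).filter (fun n => n.Coprime P),
      (if Squarefree n then (1 : ℤ) else 0)
        = ∑ d ∈ Icc 1 N.sqrt, (if d ^ 2 ∣ n then (μ d : ℤ) else 0) := by
    intro n hn
    simp only [Finset.mem_filter, Finset.mem_Icc] at hn
    rw [← Finset.sum_filter, moebius_sum_sq_dvd hn.1.1 hn.1.2]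
  rw [Finset.sum_congr rfl step2, Finset.sum_comm]
  apply Finset.sum_congr rfl
  intro d hd
  simp only [Finset.mem_Icc] at hd
  rw [← Finset.sum_filter, Finset.filter_filter, Finset.sum_const]
  have hfe : ((Icc 1 N).filter fun n => n.Coprime P ∧ d ^ 2 ∣ n)
      = (Icc 1 N).filter fun n => d ^ 2 ∣ n ∧ n.Coprime P := by
    apply Finset.filter_congr; intro x _; exact and_comm
  rw [hfe]
  by_cases hdP : d.Coprime P
  · rw [count_mult (by omega) hdP, if_pos hdP, nsmul_eq_mul, mul_comm]
  · rw [count_empty hdP, if_neg hdP, mul_zero, zero_smul]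

lemma Acnt_split (P M t : ℕ) :
    Acnt P (M + t) = Acnt P M + #{x ∈ Ico (M + 1) (M + 1 + t) | x.Coprime P} := by
  have hsplit : Icc 1 (M + t) = Icc 1 M ∪ Ico (M + 1) (M + 1 + t) := by
    ext x
    simp only [Finset.mem_union, Finset.mem_Icc, Finset.mem_Ico]
    omega
  rw [Acnt, hsplit, Finset.filter_union, Finset.card_union_of_disjoint, Acnt]
  rw [Finset.disjoint_left]
  intro a ha hb
  simp only [Finset.mem_filter, Finset.mem_Icc] at ha
  simp only [Finset.mem_filter, Finset.mem_Ico] at hb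
  omega

lemma Acnt_le (P M : ℕ) : Acnt P M ≤ M := by
  calc Acnt P M ≤ #(Icc 1 M) := Finset.card_filter_le _ _
    _ = M := by rw [Nat.card_Icc]; omega

lemma Acnt_mono (P : ℕ) {M M' : ℕ} (h : M ≤ M') : Acnt P M ≤ Acnt P M' := by
  apply Finset.card_le_card
  apply Finset.filter_subset_filter
  exact Finset.Icc_subset_Icc_right h

lemma Acnt_add_le (P M t : ℕ) : Acnt P (M + t) ≤ Acnt P M + t := by
  rw [Acnt_split]
  have : #{x ∈ Ico (M + 1) (M + 1 + t) | x.Coprime P} ≤ #(Ico (M + 1) (M + 1 + t)) :=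
    Finset.card_filter_le _ _
  rw [Nat.card_Ico] at this
  omega

lemma Acnt_add_period (P M : ℕ) : Acnt P (M + P) = Acnt P M + P.totient := by
  rw [Acnt_split]
  congr 1
  rw [← Nat.filter_coprime_Ico_eq_totient P (M + 1)]
  congr 1
  apply Finset.filter_congr
  intro x _
  simp [Nat.coprime_comm]

lemma Acnt_mod (P M : ℕ) (hP : 0 < P) :
    Acnt P M = M / P * P.totient + Acnt P (M % P) := by
  have key : ∀ q r : ℕ, Acnt P (q * P + r) = q * P.totient + Acnt P r := by
    intro q
    induction q with
    | zero => simp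
    | succ k ih =>
      intro r
      have : (k + 1) * P + r = (k * P + r) + P := by ring
      rw [this, Acnt_add_period, ih r]
      ring
  conv_lhs => rw [← Nat.div_add_mod M P]
  rw [Nat.mul_comm P (M / P), key]

lemma Acnt_period (P : ℕ) (hP : 2 ≤ P) : Acnt P (P - 1) = P.totient := by
  rw [Nat.totient_eq_card_coprime]
  symm
  refine Finset.card_bij' (fun n _ => n) (fun m _ => m) ?_ ?_ (fun _ _ => rfl) (fun _ _ => rfl)
  · intro n hn
    simp only [Finset.mem_filter, Finset.mem_range] at hn
    simp only [Acnt, Finset.mem_filter, Finset.mem_Icc]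
    have hn0 : n ≠ 0 := by
      rintro rfl
      rw [Nat.coprime_zero_right] at hn
      omega
    exact ⟨⟨by omega, by omega⟩, Nat.coprime_comm.mp hn.2⟩
  · intro m hm
    simp only [Acnt, Finset.mem_filter, Finset.mem_Icc] at hm
    simp only [Finset.mem_filter, Finset.mem_range]
    exact ⟨by omega, Nat.coprime_comm.mp hm.2⟩

noncomputable def mterm (P : ℕ) (d : ℕ) : ℝ :=
  if d.Coprime P then (μ d : ℝ) / (d : ℝ) ^ 2 else 0

noncomputable def g2aux (p P : ℕ) (d : ℕ) : ℝ :=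
  if p ∣ d ∧ d.Coprime P then (μ d : ℝ) / (d : ℝ) ^ 2 else 0

lemma abs_moebius_le_one (d : ℕ) : |(μ d : ℝ)| ≤ 1 := by
  rcases eq_or_ne (μ d) 0 with h | h
  · simp [h]
  · have h1 := abs_moebius_eq_one_of_squarefree (moebius_ne_zero_iff_squarefree.mp h)
    have h2 : |(μ d : ℝ)| = 1 := by rw [← Int.cast_abs, h1, Int.cast_one]
    exact h2.le

lemma mterm_abs_le (P d : ℕ) : |mterm P d| ≤ ((d : ℝ) ^ 2)⁻¹ := by
  rw [mterm]
  split
  · rw [abs_div, abs_pow, abs_of_nonneg (by positivity : (0:ℝ) ≤ (d:ℝ))]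
    rw [div_eq_mul_inv]
    nth_rewrite 2 [← one_mul ((d:ℝ)^2)⁻¹]
    exact mul_le_mul_of_nonneg_right (abs_moebius_le_one d) (by positivity)
  · rw [abs_zero]; positivity

lemma mterm_summable (P : ℕ) : Summable (mterm P) := by
  apply Summable.of_norm_bounded (Real.summable_nat_pow_inv.mpr one_lt_two)
  intro d
  simpa [Real.norm_eq_abs] using mterm_abs_le P d

lemma mterm_zero (P : ℕ) : mterm P 0 = 0 := by simp [mterm]

open Real in
lemma mterm_tsum_one : ∑' d, mterm 1 d = 6 / π ^ 2 := by
  have hs : (1 : ℝ) < (2 : ℂ).re := by norm_num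
  have hL : LSeries (fun n => (μ n : ℂ)) 2 = 6 / (π : ℂ) ^ 2 := by
    have h1 := LSeries_zeta_mul_Lseries_moebius hs
    rw [LSeries_zeta_eq_riemannZeta hs, riemannZeta_two] at h1
    have hπ : ((π : ℂ)) ^ 2 ≠ 0 := by
      simpa using Complex.ofReal_ne_zero.mpr Real.pi_ne_zero
    field_simp at h1 ⊢
    linear_combination h1
  have hterm : ∀ n, ((mterm 1 n : ℝ) : ℂ) = LSeries.term (fun n => (μ n : ℂ)) 2 n := by
    intro n
    rcases eq_or_ne n 0 with rfl | hn
    · simp [mterm_zero]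
    · rw [LSeries.term_of_ne_zero hn]
      have h2 : ((n : ℂ)) ^ (2 : ℂ) = ((n : ℂ)) ^ (2 : ℕ) := by
        rw [show (2 : ℂ) = ((2 : ℕ) : ℂ) by norm_num, Complex.cpow_natCast]
      rw [h2, mterm, if_pos (Nat.coprime_one_right n)]
      push_cast
      ring
  have hcast := Complex.ofReal_tsum (L := SummationFilter.unconditional ℕ) (mterm 1)
  rw [tsum_congr hterm] at hcast
  have h6 : ((6 / π ^ 2 : ℝ) : ℂ) = 6 / (π : ℂ) ^ 2 := by push_cast; ring
  apply Complex.ofReal_injective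
  rw [hcast, h6, ← hL]
  rfl

lemma prime_dvd_prod_primes {S : Finset ℕ} (hS : ∀ p ∈ S, p.Prime) {q : ℕ} (hq : q.Prime) :
    q ∣ ∏ p ∈ S, p ↔ q ∈ S := by
  constructor
  · intro h
    obtain ⟨p, hp, hqp⟩ := (hq.prime.dvd_finset_prod_iff _root_.id).mp h
    rwa [(Nat.prime_dvd_prime_iff_eq hq (hS p hp)).mp hqp]
  · intro h; exact Finset.dvd_prod_of_mem _ h

lemma totient_prod_primes {S : Finset ℕ} (hS : ∀ p ∈ S, p.Prime) :
    (∏ p ∈ S, p).totient = ∏ p ∈ S, (p - 1) := by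
  induction S using Finset.induction_on with
  | empty => simp
  | @insert a s ha ih =>
    have hS' : ∀ p ∈ s, p.Prime := fun p hp => hS p (mem_insert_of_mem hp)
    have hap : a.Prime := hS a (mem_insert_self a s)
    have hcop : a.Coprime (∏ p ∈ s, p) :=
      hap.coprime_iff_not_dvd.mpr (fun h => ha ((prime_dvd_prod_primes hS' hap).mp h))
    rw [prod_insert ha, prod_insert ha, Nat.totient_mul hcop, Nat.totient_prime hap, ih hS']

lemma mterm_step {P p : ℕ} (hp : p.Prime) (hpP : ¬ p ∣ P) :
    ∑' d, mterm P d = (1 - ((p : ℝ) ^ 2)⁻¹) * ∑' d, mterm (p * P) d := by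
  have hppos : 0 < p := hp.pos
  have hcpP : p.Coprime P := hp.coprime_iff_not_dvd.mpr hpP
  have hsplit : ∀ d, mterm P d = mterm (p * P) d + g2aux p P d := by
    intro d
    by_cases hc : d.Coprime P
    · by_cases hpd : p ∣ d
      · have hnc : ¬ d.Coprime (p * P) := by
          intro h
          have h1 : d.Coprime p := h.coprime_dvd_right (dvd_mul_right p P)
          exact (hp.coprime_iff_not_dvd.mp (Nat.coprime_comm.mp h1)) hpd
        rw [mterm, mterm, g2aux, if_pos hc, if_neg hnc, if_pos ⟨hpd, hc⟩, zero_add]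
      · have hc2 : d.Coprime (p * P) :=
          Nat.Coprime.mul_right (Nat.coprime_comm.mp (hp.coprime_iff_not_dvd.mpr hpd)) hc
        rw [mterm, mterm, g2aux, if_pos hc, if_pos hc2,
          if_neg (fun h => hpd h.1), add_zero]
    · have hnc : ¬ d.Coprime (p * P) := fun h => hc (h.coprime_dvd_right (dvd_mul_left P p))
      rw [mterm, mterm, g2aux, if_neg hc, if_neg hnc,
        if_neg (fun h => hc h.2), add_zero]
  have hg2sum : Summable (g2aux p P) := by
    have heq : g2aux p P = fun d => mterm P d - mterm (p * P) d := by
      ext d; rw [hsplit d]; ring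
    rw [heq]
    exact (mterm_summable P).sub (mterm_summable (p * P))
  have hreindex : ∑' d, g2aux p P d = ∑' e, g2aux p P (p * e) := by
    symm
    apply Function.Injective.tsum_eq (mul_right_injective₀ hppos.ne')
    intro x hx
    rw [Function.mem_support] at hx
    by_contra hr
    apply hx
    rw [g2aux]
    simp only [ite_eq_right_iff]
    rintro ⟨hpx, -⟩
    exact absurd hpx (fun ⟨c, hc⟩ => hr ⟨c, hc.symm⟩)
  have hval : ∀ e, g2aux p P (p * e) = -(((p : ℝ) ^ 2)⁻¹) * mterm (p * P) e := by
    intro e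
    rcases eq_or_ne e 0 with rfl | he
    · simp [g2aux, mterm]
    by_cases hcop : e.Coprime (p * P)
    · have hpe : ¬ p ∣ e := by
        intro h
        have h1 : e.Coprime p := hcop.coprime_dvd_right (dvd_mul_right p P)
        exact (hp.coprime_iff_not_dvd.mp (Nat.coprime_comm.mp h1)) h
      have hcpe : p.Coprime e := hp.coprime_iff_not_dvd.mpr hpe
      have hcePmul : (p * e).Coprime P :=
        Nat.Coprime.mul hcpP (hcop.coprime_dvd_right (dvd_mul_left P p))
      have hμ : μ (p * e) = μ p * μ e := isMultiplicative_moebius.map_mul_of_coprime hcpe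
      rw [g2aux, if_pos ⟨dvd_mul_right p e, hcePmul⟩, mterm, if_pos hcop, hμ,
        moebius_apply_prime hp]
      have hpne : ((p : ℝ)) ≠ 0 := by exact_mod_cast hppos.ne'
      have hene : ((e : ℝ)) ≠ 0 := by exact_mod_cast he
      push_cast
      field_simp
    · rw [mterm, if_neg hcop, mul_zero, g2aux]
      simp only [ite_eq_right_iff]
      rintro ⟨-, hcopP⟩
      by_cases hpe : p ∣ e
      · have hnsq : ¬ Squarefree (p * e) := by
          intro hsq
          have hdvd : p * p ∣ p * e := mul_dvd_mul_left p hpe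
          have := Nat.isUnit_iff.mp (hsq p hdvd)
          have := hp.two_le
          omega
        rw [moebius_eq_zero_of_not_squarefree hnsq]
        simp
      · exfalso
        apply hcop
        have h1 : e.Coprime P := Nat.Coprime.coprime_dvd_left (dvd_mul_left e p) hcopP
        exact Nat.Coprime.mul_right (Nat.coprime_comm.mp (hp.coprime_iff_not_dvd.mpr hpe)) h1
  have hfin : ∑' d, mterm P d = ∑' d, mterm (p * P) d + ∑' d, g2aux p P d := by
    rw [← Summable.tsum_add (mterm_summable (p * P)) hg2sum]
    exact tsum_congr hsplit
  rw [hfin, hreindex, tsum_congr hval, tsum_mul_left]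
  ring

lemma mterm_tsum_prod {S : Finset ℕ} (hS : ∀ p ∈ S, p.Prime) :
    (∏ p ∈ S, (1 - ((p : ℝ) ^ 2)⁻¹)) * ∑' d, mterm (∏ p ∈ S, p) d = 6 / Real.pi ^ 2 := by
  induction S using Finset.induction_on with
  | empty => simpa using mterm_tsum_one
  | @insert a s ha ih =>
    have hS' : ∀ p ∈ s, p.Prime := fun p hp => hS p (mem_insert_of_mem hp)
    have hap : a.Prime := hS a (mem_insert_self a s)
    have hnd : ¬ a ∣ ∏ p ∈ s, p := fun h => ha ((prime_dvd_prod_primes hS' hap).mp h)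
    have hstep := mterm_step hap hnd
    rw [prod_insert ha, prod_insert ha, mul_comm (1 - ((a:ℝ)^2)⁻¹), mul_assoc, ← hstep,
      ih hS']

lemma Acnt_est (P : ℕ) (hP : 0 < P) (M : ℕ) :
    |((Acnt P M : ℝ)) - (P.totient : ℝ) / (P : ℝ) * M|
      ≤ ((P : ℝ) - 1 - (P.totient : ℝ)) + (P.totient : ℝ) / (P : ℝ) := by
  have hPr : (0:ℝ) < (P:ℝ) := by exact_mod_cast hP
  have htpos : 0 < P.totient := Nat.totient_pos.mpr hP
  set r := M % P with hr
  have hrP : r < P := Nat.mod_lt M hP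
  have h1 : Acnt P M = M / P * P.totient + Acnt P r := Acnt_mod P M hP
  have hM : (M : ℝ) = (P : ℝ) * ((M / P : ℕ) : ℝ) + (r : ℝ) := by
    exact_mod_cast (Nat.div_add_mod M P).symm
  have hred : (Acnt P M : ℝ) - (P.totient : ℝ) / P * M
      = (Acnt P r : ℝ) - (P.totient : ℝ) / P * r := by
    rw [h1, hM]
    push_cast
    field_simp
    ring
  rw [hred]
  rcases Nat.eq_zero_or_pos r with hr0 | hrpos
  · rw [hr0]
    have hA0 : Acnt P 0 = 0 := by
      rw [Acnt, Finset.Icc_eq_empty (by omega), Finset.filter_empty, Finset.card_empty]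
    rw [hA0]
    simp only [Nat.cast_zero, mul_zero, sub_zero, abs_zero]
    rcases eq_or_lt_of_le (Nat.succ_le_of_lt hP) with h1' | h2'
    · have hPone : P = 1 := h1'.symm
      subst hPone
      norm_num [Nat.totient_one]
    · have htP : P.totient < P := Nat.totient_lt P h2'
      have c8 : (P.totient : ℝ) ≤ (P : ℝ) - 1 := by
        have : P.totient + 1 ≤ P := htP
        have := (Nat.cast_le (α := ℝ)).mpr this
        push_cast at this
        linarith
      have : (0:ℝ) ≤ (P.totient : ℝ) / P := by positivity
      linarith
  · have hP2 : 2 ≤ P := by omega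
    have h2 : Acnt P r ≤ r := Acnt_le P r
    have h3 : Acnt P r ≤ P.totient := by
      have := Acnt_mono P (show r ≤ P - 1 by omega)
      rwa [Acnt_period P hP2] at this
    have h4 : P.totient ≤ Acnt P r + (P - 1 - r) := by
      have h := Acnt_add_le P r (P - 1 - r)
      rw [show r + (P - 1 - r) = P - 1 by omega, Acnt_period P hP2] at h
      exact h
    set a : ℝ := (Acnt P r : ℝ) with ha
    set t : ℝ := (P.totient : ℝ) with htr
    have c0 : 0 ≤ a := by positivity
    have c2 : a ≤ (r : ℝ) := by rw [ha]; exact_mod_cast h2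
    have c3 : a ≤ t := by rw [ha, htr]; exact_mod_cast h3
    have c4 : t ≤ a + ((P:ℝ) - 1 - r) := by
      have : (P.totient : ℝ) ≤ ((Acnt P r + (P - 1 - r) : ℕ) : ℝ) := by exact_mod_cast h4
      push_cast at this
      rw [Nat.cast_sub (by omega : r ≤ P - 1), Nat.cast_sub (by omega : 1 ≤ P)] at this
      push_cast at this
      linarith
    have c5 : (1:ℝ) ≤ (r:ℝ) := by exact_mod_cast hrpos
    have c6 : (r:ℝ) ≤ (P:ℝ) - 1 := by
      have : (r:ℝ) + 1 ≤ (P:ℝ) := by exact_mod_cast hrP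
      linarith
    have c7 : (1:ℝ) ≤ t := by rw [htr]; exact_mod_cast htpos
    have c8 : t ≤ (P:ℝ) - 1 := by
      have : (P.totient : ℝ) + 1 ≤ (P:ℝ) := by exact_mod_cast Nat.totient_lt P (by omega)
      linarith
    have key : a - t / P * r = (a * P - t * r) / P := by field_simp
    rw [key, abs_div, abs_of_pos hPr, div_le_iff₀ hPr]
    have hRHS : ((P:ℝ) - 1 - t + t / P) * P = ((P:ℝ) - 1 - t) * P + t := by
      field_simp
    rw [hRHS]
    rw [abs_le]
    constructor
    · -- lower bound
      have expand' : a * P - t * r + ((((P:ℝ) - 1 - t)) * P + t)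
          = (a - t + ((P:ℝ) - 1 - r)) * P + (r:ℝ) * ((P:ℝ) - t) + t := by ring
      have h₁ : 0 ≤ (a - t + ((P:ℝ) - 1 - r)) * P := mul_nonneg (by linarith) hPr.le
      have h₂ : 0 ≤ (r:ℝ) * ((P:ℝ) - t) := mul_nonneg (by linarith) (by linarith)
      linarith
    · -- upper bound
      by_cases hc : (r : ℝ) ≤ t
      · have expand : (((P:ℝ) - 1 - t)) * P + t - (a * P - t * r)
            = ((P:ℝ) - t) * ((P:ℝ) - r - 1) + ((r:ℝ) - a) * P := by ring
        have h₁ : 0 ≤ ((P:ℝ) - t) * ((P:ℝ) - r - 1) :=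
          mul_nonneg (by linarith) (by linarith)
        have h₂ : 0 ≤ ((r:ℝ) - a) * P := mul_nonneg (by linarith) hPr.le
        linarith
      · have expand : (((P:ℝ) - 1 - t)) * P + t - (a * P - t * r)
            = (t - a) * P + t * ((r:ℝ) - t) + ((P:ℝ) - t) * ((P:ℝ) - t - 1) := by ring
        have h₁ : 0 ≤ (t - a) * P := mul_nonneg (by linarith) hPr.le
        have h₂ : 0 ≤ t * ((r:ℝ) - t) := mul_nonneg (by linarith) (by linarith)
        have h₃ : 0 ≤ ((P:ℝ) - t) * ((P:ℝ) - t - 1) :=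
          mul_nonneg (by linarith) (by linarith)
        linarith

end SqfDensity

open SqfDensity Finset ArithmeticFunction in
set_option maxHeartbeats 2000000 in
/-- For a finite set `S` of primes, the density of square-free numbers up to `N`
divisible by no prime of `S` differs from `(6/π²)·∏_{p∈S} p/(p+1)` by at most
`C(S)·N^(-1/2)` for every `N ≥ 4`, where
`C(S) = 4·∏_{p∈S} (p−1)/p + (∏_{p∈S} p − 1) − ∏_{p∈S} (p−1)`. -/
theorem density_of_squarefree_avoiding_primes (S : Finset ℕ) (hS : ∀ p ∈ S, p.Prime) :
    ∀ N : ℕ, 4 ≤ N →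
      |(((Finset.Icc 1 N).filter
            (fun n : ℕ => Squarefree n ∧ ∀ p ∈ S, ¬ p ∣ n)).card : ℝ) / (N : ℝ)
          - (6 / Real.pi ^ 2) * ∏ p ∈ S, (p : ℝ) / ((p : ℝ) + 1)|
        ≤ (4 * ∏ p ∈ S, ((p : ℝ) - 1) / (p : ℝ)
            + ((∏ p ∈ S, (p : ℝ)) - 1) - ∏ p ∈ S, ((p : ℝ) - 1)) / Real.sqrt N := by
  intro N hN
  classical
  have hNpos : 0 < N := by omega
  set P : ℕ := ∏ p ∈ S, p with hPdef
  have hPpos : 0 < P := Finset.prod_pos (fun p hp => (hS p hp).pos)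
  set K : ℕ := N.sqrt with hK
  have hNr : (0:ℝ) < (N:ℝ) := by exact_mod_cast hNpos
  have hsqpos : (0:ℝ) < Real.sqrt N := Real.sqrt_pos.mpr hNr
  have hPr : (0:ℝ) < (P:ℝ) := by exact_mod_cast hPpos
  have hp2 : ∀ p ∈ S, (2:ℝ) ≤ (p:ℝ) := fun p hp => by exact_mod_cast (hS p hp).two_le
  have hφr : ((P.totient : ℝ)) = ∏ p ∈ S, ((p:ℝ) - 1) := by
    rw [hPdef, totient_prod_primes hS, Nat.cast_prod]
    exact Finset.prod_congr rfl (fun p hp => by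
      rw [Nat.cast_sub (hS p hp).one_le, Nat.cast_one])
  have hPrprod : ((P:ℕ):ℝ) = ∏ p ∈ S, (p:ℝ) := by rw [hPdef, Nat.cast_prod]
  set t : ℝ := (P.totient : ℝ) with ht
  have hprodtp : ∏ p ∈ S, ((p:ℝ) - 1) / (p:ℝ) = t / (P:ℝ) := by
    rw [Finset.prod_div_distrib, ← hφr, ← hPrprod]
  -- rewrite the filter condition
  have hfilter : (Finset.Icc 1 N).filter (fun n : ℕ => Squarefree n ∧ ∀ p ∈ S, ¬ p ∣ n)
      = (Finset.Icc 1 N).filter (fun n => Squarefree n ∧ n.Coprime P) := by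
    apply Finset.filter_congr
    intro n _
    have hiff : (∀ p ∈ S, ¬ p ∣ n) ↔ n.Coprime P := by
      rw [hPdef, Nat.coprime_prod_right_iff]
      apply forall₂_congr
      intro p hp
      rw [Nat.coprime_comm]
      exact ((hS p hp).coprime_iff_not_dvd).symm
    exact and_congr_right (fun _ => hiff)
  rw [hfilter]
  -- counting identity over ℝ
  have hcast : ∀ d : ℕ, ((μ d * (if d.Coprime P then (Acnt P (N / d ^ 2) : ℤ) else 0) : ℤ) : ℝ)
      = if d.Coprime P then (μ d : ℝ) * ((Acnt P (N / d ^ 2) : ℝ)) else 0 := by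
    intro d
    split <;> push_cast <;> ring
  have hcount : ((#{n ∈ Icc 1 N | Squarefree n ∧ n.Coprime P}) : ℝ)
      = ∑ d ∈ Icc 1 K, (if d.Coprime P then (μ d : ℝ) * ((Acnt P (N / d ^ 2) : ℝ)) else 0) := by
    have h := congrArg (fun z : ℤ => (z : ℝ)) (count_identity P N)
    simp only [Int.cast_sum, Int.cast_natCast] at h
    rw [← hK] at h
    rw [h]
    exact Finset.sum_congr rfl (fun d _ => hcast d)
  set F : ℝ := ∑' d, mterm P d with hF
  -- main term
  have hmain : (6 / Real.pi ^ 2) * ∏ p ∈ S, (p:ℝ) / ((p:ℝ) + 1) = (t / (P:ℝ)) * F := by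
    have hprod := mterm_tsum_prod hS
    rw [← hPdef, ← hF] at hprod
    have hfac : ∏ p ∈ S, (1 - ((p:ℝ)^2)⁻¹) * ((p:ℝ) / ((p:ℝ) + 1)) = t / (P:ℝ) := by
      rw [← hprodtp]
      apply Finset.prod_congr rfl
      intro p hp
      have h2 : (2:ℝ) ≤ (p:ℝ) := hp2 p hp
      have hpne : (p:ℝ) ≠ 0 := by linarith
      have hp1ne : (p:ℝ) + 1 ≠ 0 := by linarith
      field_simp
      ring
    calc (6 / Real.pi ^ 2) * ∏ p ∈ S, (p:ℝ) / ((p:ℝ) + 1)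
        = ((∏ p ∈ S, (1 - ((p:ℝ)^2)⁻¹)) * F) * ∏ p ∈ S, (p:ℝ) / ((p:ℝ) + 1) := by
          rw [hprod]
      _ = (∏ p ∈ S, (1 - ((p:ℝ)^2)⁻¹) * ((p:ℝ) / ((p:ℝ) + 1))) * F := by
          rw [Finset.prod_mul_distrib]; ring
      _ = (t / (P:ℝ)) * F := by rw [hfac]
  -- per-d error bound
  set θ : ℝ := ((P:ℝ) - 1 - t) + t / (P:ℝ) with hθ
  have hθ0 : 0 ≤ θ := le_trans (abs_nonneg _) (Acnt_est P hPpos 0)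
  have htP0 : 0 ≤ t / (P:ℝ) := by positivity
  set B : ℝ := θ + t / (P:ℝ) with hB
  have hB0 : 0 ≤ B := by rw [hB]; linarith
  have hper : ∀ d ∈ Icc 1 K,
      |(if d.Coprime P then (μ d : ℝ) * ((Acnt P (N / d ^ 2) : ℝ)) else 0) / N
        - (t / (P:ℝ)) * mterm P d| ≤ B / N := by
    intro d hd
    rw [Finset.mem_Icc] at hd
    have hd1 : 1 ≤ d := hd.1
    have hdr : (0:ℝ) < (d:ℝ) := by exact_mod_cast hd1
    by_cases hc : d.Coprime P
    · rw [if_pos hc, mterm, if_pos hc]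
      set M : ℕ := N / d ^ 2 with hM
      have hlow : (M:ℝ) ≤ (N:ℝ) / (d:ℝ) ^ 2 := by
        rw [le_div_iff₀ (by positivity)]
        exact_mod_cast Nat.div_mul_le_self N (d ^ 2)
      have hhigh : (N:ℝ) / (d:ℝ) ^ 2 ≤ (M:ℝ) + 1 := by
        rw [div_le_iff₀ (by positivity)]
        have h0 : N < (M + 1) * d ^ 2 :=
          (Nat.div_lt_iff_lt_mul (pow_pos (by omega) 2)).mp (Nat.lt_succ_self M)
        have h3 : (N:ℝ) < (((M + 1) * d ^ 2 : ℕ) : ℝ) := by exact_mod_cast h0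
        push_cast at h3
        linarith
      have hAe := Acnt_est P hPpos M
      rw [← ht] at hAe
      have hA2 : |(Acnt P M : ℝ) - (t / (P:ℝ)) * ((N:ℝ) / (d:ℝ) ^ 2)| ≤ B := by
        have htri : (Acnt P M : ℝ) - (t / (P:ℝ)) * ((N:ℝ) / (d:ℝ) ^ 2)
            = ((Acnt P M : ℝ) - t / (P:ℝ) * M)
              + (t / (P:ℝ)) * ((M:ℝ) - (N:ℝ) / (d:ℝ) ^ 2) := by ring
        rw [htri, hB, hθ]
        refine (abs_add_le _ _).trans (add_le_add hAe ?_)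
        rw [abs_mul, abs_of_nonneg htP0]
        have habs1 : |(M:ℝ) - (N:ℝ) / (d:ℝ) ^ 2| ≤ 1 := by
          rw [abs_le]; constructor <;> linarith
        calc t / (P:ℝ) * |(M:ℝ) - (N:ℝ) / (d:ℝ) ^ 2| ≤ t / (P:ℝ) * 1 :=
            mul_le_mul_of_nonneg_left habs1 htP0
          _ = t / (P:ℝ) := mul_one _
      have hkey : (μ d : ℝ) * (Acnt P M : ℝ) / N - (t / (P:ℝ)) * ((μ d : ℝ) / (d:ℝ) ^ 2)
          = ((μ d : ℝ) / N) * ((Acnt P M : ℝ) - (t / (P:ℝ)) * ((N:ℝ) / (d:ℝ) ^ 2)) := by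
        field_simp
      rw [hkey, abs_mul, abs_div, abs_of_pos hNr]
      calc |(μ d : ℝ)| / N * |(Acnt P M : ℝ) - t / (P:ℝ) * ((N:ℝ) / (d:ℝ) ^ 2)|
          ≤ 1 / N * B := by
            apply mul_le_mul ?_ hA2 (abs_nonneg _) (by positivity)
            gcongr
            exact abs_moebius_le_one d
        _ = B / N := by ring
    · rw [if_neg hc, mterm, if_neg hc]
      simp only [zero_div, mul_zero, sub_zero, abs_zero]
      positivity
  -- tail bound
  have hrange : Finset.range (K + 1) = insert 0 (Icc 1 K) := by
    ext x
    simp only [Finset.mem_range, Finset.mem_insert, Finset.mem_Icc]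
    omega
  have hpartial : ∑ d ∈ Icc 1 K, mterm P d = ∑ d ∈ Finset.range (K + 1), mterm P d := by
    rw [hrange, Finset.sum_insert (by simp), mterm_zero, zero_add]
  have htailrep : F - ∑ d ∈ Icc 1 K, mterm P d = ∑' i, mterm P (i + (K + 1)) := by
    rw [hpartial, sub_eq_iff_eq_add', hF]
    exact (Summable.sum_add_tsum_nat_add (K + 1) (mterm_summable P)).symm
  have hsumnorm : Summable (fun d => ‖mterm P d‖) := by
    apply Summable.of_nonneg_of_le (fun d => norm_nonneg _)
      (fun d => by simpa [Real.norm_eq_abs] using mterm_abs_le P d)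
    exact Real.summable_nat_pow_inv.mpr one_lt_two
  have hsumnormshift : Summable (fun i => ‖mterm P (i + (K + 1))‖) :=
    (summable_nat_add_iff (K + 1)).mpr hsumnorm
  have hsuminvshift : Summable (fun i : ℕ => (((i + (K + 1) : ℕ) : ℝ) ^ 2)⁻¹) :=
    (summable_nat_add_iff (K + 1)).mpr (Real.summable_nat_pow_inv.mpr one_lt_two)
  have htail : |F - ∑ d ∈ Icc 1 K, mterm P d| ≤ 2 / ((K:ℝ) + 1) := by
    rw [htailrep, ← Real.norm_eq_abs]
    refine (norm_tsum_le_tsum_norm hsumnormshift).trans ?_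
    refine (Summable.tsum_le_tsum (fun i => by
        simpa [Real.norm_eq_abs] using mterm_abs_le P (i + (K + 1)))
      hsumnormshift hsuminvshift).trans ?_
    apply Summable.tsum_le_of_sum_range_le hsuminvshift
    intro n
    have hrw : ∑ i ∈ Finset.range n, (((i + (K + 1) : ℕ) : ℝ) ^ 2)⁻¹
        = ∑ j ∈ Finset.Ico (K + 1) (K + 1 + n), (((j : ℕ) : ℝ) ^ 2)⁻¹ := by
      rw [Finset.sum_Ico_eq_sum_range]
      simp only [Nat.add_sub_cancel_left]
      exact Finset.sum_congr rfl (fun i _ => by rw [add_comm (K+1) i])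
    rw [hrw]
    have hIco : Finset.Ico (K + 1) (K + 1 + n) = Finset.Ioo K (K + 1 + n) := by
      ext x
      simp only [Finset.mem_Ico, Finset.mem_Ioo]
      omega
    rw [hIco]
    exact_mod_cast sum_Ioo_inv_sq_le (α := ℝ) K (K + 1 + n)
  -- decomposition
  set T : ℝ := F - ∑ d ∈ Icc 1 K, mterm P d with hT
  have hdecomp : ((#{n ∈ Icc 1 N | Squarefree n ∧ n.Coprime P}) : ℝ) / N - (t / (P:ℝ)) * F
      = (∑ d ∈ Icc 1 K,
          ((if d.Coprime P then (μ d : ℝ) * ((Acnt P (N / d ^ 2) : ℝ)) else 0) / N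
            - (t / (P:ℝ)) * mterm P d))
        - (t / (P:ℝ)) * T := by
    rw [hcount, hT, Finset.sum_sub_distrib, ← Finset.sum_div, ← Finset.mul_sum]
    ring
  -- square root facts
  have hKle : ((K:ℝ)) ≤ Real.sqrt N := by
    have h1 : ((K:ℝ)) ^ 2 ≤ (N:ℝ) := by
      exact_mod_cast (Nat.sqrt_le' N : K ^ 2 ≤ N)
    calc ((K:ℝ)) = Real.sqrt ((K:ℝ) ^ 2) := (Real.sqrt_sq (by positivity)).symm
      _ ≤ Real.sqrt N := Real.sqrt_le_sqrt h1
  have hsqle : Real.sqrt N ≤ (K:ℝ) + 1 := by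
    have h0 : N < (K + 1) ^ 2 := Nat.lt_succ_sqrt' N
    have h2 : N ≤ (K + 1) * (K + 1) := by
      rw [pow_two] at h0
      omega
    have h3 : (N:ℝ) ≤ (((K + 1) * (K + 1) : ℕ) : ℝ) := by exact_mod_cast h2
    push_cast at h3
    have h1 : (N:ℝ) ≤ ((K:ℝ) + 1) ^ 2 := by nlinarith [h3]
    calc Real.sqrt N ≤ Real.sqrt (((K:ℝ) + 1) ^ 2) := Real.sqrt_le_sqrt h1
      _ = (K:ℝ) + 1 := Real.sqrt_sq (by positivity)
  -- assemble
  rw [hmain, hdecomp]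
  have hsum_bound : |∑ d ∈ Icc 1 K,
      ((if d.Coprime P then (μ d : ℝ) * ((Acnt P (N / d ^ 2) : ℝ)) else 0) / N
        - (t / (P:ℝ)) * mterm P d)| ≤ (K:ℝ) * (B / N) := by
    refine (Finset.abs_sum_le_sum_abs _ _).trans ?_
    calc ∑ d ∈ Icc 1 K, |(if d.Coprime P then (μ d : ℝ) * ((Acnt P (N / d ^ 2) : ℝ)) else 0) / N
          - (t / (P:ℝ)) * mterm P d|
        ≤ ∑ _d ∈ Icc 1 K, B / N := Finset.sum_le_sum hper
      _ = (K:ℝ) * (B / N) := by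
          rw [Finset.sum_const, Nat.card_Icc, Nat.add_sub_cancel, nsmul_eq_mul]
  have hKN : (K:ℝ) / N ≤ 1 / Real.sqrt N := by
    rw [div_le_div_iff₀ hNr hsqpos]
    calc (K:ℝ) * Real.sqrt N ≤ Real.sqrt N * Real.sqrt N :=
        mul_le_mul_of_nonneg_right hKle hsqpos.le
      _ = (N:ℝ) := Real.mul_self_sqrt hNr.le
      _ = 1 * N := (one_mul _).symm
  have h1 : (K:ℝ) * (B / N) ≤ B / Real.sqrt N := by
    have hm := mul_le_mul_of_nonneg_right hKN hB0
    calc (K:ℝ) * (B/N) = (K:ℝ)/N * B := by ring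
      _ ≤ 1/Real.sqrt N * B := hm
      _ = B / Real.sqrt N := by ring
  have h2 : (t / (P:ℝ)) * |T| ≤ (t / (P:ℝ)) * (2 / Real.sqrt N) := by
    apply mul_le_mul_of_nonneg_left ?_ htP0
    refine htail.trans ?_
    gcongr
  calc |(∑ d ∈ Icc 1 K,
      ((if d.Coprime P then (μ d : ℝ) * ((Acnt P (N / d ^ 2) : ℝ)) else 0) / N
        - (t / (P:ℝ)) * mterm P d)) - (t / (P:ℝ)) * T|
      ≤ |∑ d ∈ Icc 1 K,
          ((if d.Coprime P then (μ d : ℝ) * ((Acnt P (N / d ^ 2) : ℝ)) else 0) / N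
            - (t / (P:ℝ)) * mterm P d)| + |(t / (P:ℝ)) * T| := abs_sub _ _
    _ ≤ (K:ℝ) * (B / N) + (t / (P:ℝ)) * |T| := by
        refine add_le_add hsum_bound (le_of_eq ?_)
        rw [abs_mul, abs_of_nonneg htP0]
    _ ≤ B / Real.sqrt N + (t / (P:ℝ)) * (2 / Real.sqrt N) := add_le_add h1 h2
    _ = (B + 2 * (t / (P:ℝ))) / Real.sqrt N := by ring
    _ = (4 * ∏ p ∈ S, ((p : ℝ) - 1) / (p : ℝ)
            + ((∏ p ∈ S, (p : ℝ)) - 1) - ∏ p ∈ S, ((p : ℝ) - 1)) / Real.sqrt N := by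
        rw [hprodtp, ← hPrprod, ← hφr, hB, hθ]
        ring
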